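/- Let Ω be a nonempty convex subset of a topological vector space X, and let x̄ ∈ Ω. Then x̄ ∈ iri(Ω) if and only if x̄ is a relatively absorbing point of Ω, i.e., for every x ∈ Ω with x ≠ x̄ there exists u ∈ Ω such that x̄ lies in the open segment (x, u). -/

import Mathlib

open Set Pointwise Filter Topology

/-- The cone generated by a set `A`: `{t • a | t ≥ 0, a ∈ A}`. -/
def coneGen {X : Type*} [AddCommGroup X] [Module ℝ X] (A : Set X) : Set X :=
  {y | ∃ t : ℝ, 0 ≤ t ∧ ∃ a ∈ A, y = t • a}

/-- A set is a linear subspace if it is the carrier of a submodule. -/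
def IsLinSubspace {X : Type*} [AddCommGroup X] [Module ℝ X] (s : Set X) : Prop :=
  ∃ L : Submodule ℝ X, (L : Set X) = s

/-- Intrinsic relative interior. -/
def iri {X : Type*} [AddCommGroup X] [Module ℝ X] (Ω : Set X) : Set X :=
  {x ∈ Ω | IsLinSubspace (coneGen ((fun y => y - x) '' Ω))}

/-- Quasi-relative interior. -/
def qri {X : Type*} [AddCommGroup X] [Module ℝ X] [TopologicalSpace X] (Ω : Set X) : Set X :=
  {x ∈ Ω | IsLinSubspace (closure (coneGen ((fun y => y - x) '' Ω)))}

/-- Relative interior in a topological vector space. -/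
def ri {X : Type*} [AddCommGroup X] [Module ℝ X] [TopologicalSpace X] (Ω : Set X) : Set X :=
  {x ∈ Ω | ∃ V ∈ nhds x, V ∩ closure ((affineSpan ℝ Ω : Set X)) ⊆ Ω}

/-- Normal cone (functional-analytic version), a subset of the topological dual. -/
def normalCone {X : Type*} [AddCommGroup X] [Module ℝ X] [TopologicalSpace X]
    (Ω : Set X) (xb : X) : Set (X →L[ℝ] ℝ) :=
  {f | ∀ x ∈ Ω, f (x - xb) ≤ 0}

/-- `xb ∈ iri Ω` iff `xb` is a relatively absorbing point of `Ω`. -/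
theorem iri_iff_relatively_absorbing {X : Type*} [AddCommGroup X] [Module ℝ X]
    [TopologicalSpace X] [IsTopologicalAddGroup X] [ContinuousSMul ℝ X]
    (Ω : Set X) (hne : Ω.Nonempty) (hconv : Convex ℝ Ω) (xb : X) (hxb : xb ∈ Ω) :
    xb ∈ iri Ω ↔ ∀ x ∈ Ω, x ≠ xb → ∃ u ∈ Ω, xb ∈ openSegment ℝ x u := by
  have memK : ∀ y : X, y ∈ coneGen ((fun y => y - xb) '' Ω) ↔
      ∃ t : ℝ, 0 ≤ t ∧ ∃ a ∈ Ω, y = t • (a - xb) := by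
    intro y; constructor
    · rintro ⟨t, ht, _, ⟨a, ha, rfl⟩, rfl⟩; exact ⟨t, ht, a, ha, rfl⟩
    · rintro ⟨t, ht, a, ha, rfl⟩; exact ⟨t, ht, _, ⟨a, ha, rfl⟩, rfl⟩
  constructor
  · rintro ⟨-, L, hL⟩ x hx hne'
    have hmem : x - xb ∈ (L : Set X) := by
      rw [hL, memK]; exact ⟨1, zero_le_one, x, hx, (one_smul _ _).symm⟩
    have hneg : xb - x ∈ (L : Set X) := by
      have := L.neg_mem hmem
      simpa using this
    rw [hL, memK] at hneg
    obtain ⟨t, ht, a, ha, heq⟩ := hneg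
    have ht' : 0 < t := by
      rcases lt_or_eq_of_le ht with h | h
      · exact h
      · exfalso; apply hne'
        have h0 : xb - x = 0 := by rw [heq, ← h, zero_smul]
        exact (sub_eq_zero.mp h0).symm
    refine ⟨a, ha, ?_⟩
    refine ⟨1 / (1 + t), t / (1 + t), by positivity, by positivity, ?_, ?_⟩
    · field_simp
    · have h1t : (1 + t) ≠ 0 := by positivity
      have key : (1 + t) • xb = x + t • a := by
        have : xb - x = t • a - t • xb := by rw [heq, smul_sub]
        have := sub_eq_sub_iff_add_eq_add.mp this
        -- xb + t • xb = t • a + x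
        rw [add_smul, one_smul]
        linear_combination (norm := module) this
      linear_combination (norm := match_scalars <;> field_simp <;> ring) (-(1 / (1 + t)) : ℝ) • key
  · intro habs
    refine ⟨hxb, ?_⟩
    have hzero : (0 : X) ∈ coneGen ((fun y => y - xb) '' Ω) :=
      (memK 0).2 ⟨0, le_rfl, xb, hxb, by simp⟩
    have hneg : ∀ y ∈ coneGen ((fun y => y - xb) '' Ω),
        -y ∈ coneGen ((fun y => y - xb) '' Ω) := by
      intro y hy
      rw [memK] at hy ⊢
      obtain ⟨t, ht, a, ha, rfl⟩ := hy
      by_cases hax : a = xb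
      · exact ⟨0, le_rfl, xb, hxb, by simp [hax]⟩
      · obtain ⟨u, hu, p, q, hp, hq, hpq, hxbe⟩ := habs a ha hax
        refine ⟨t * (q / p), by positivity, u, hu, ?_⟩
        have hx : xb - a = (q / p) • (u - xb) := by
          have h1 : xb - a = q • (u - a) := by
            linear_combination (norm := module) hxbe.symm + (hpq - 1) • (a : X)
          have h2 : u - xb = p • (u - a) := by
            linear_combination (norm := module) -hxbe.symm + (1 - hpq) • (u : X)
          rw [h1, h2, smul_smul]
          congr 1
          field_simp
        rw [← smul_smul, ← hx]
        module
    have hadd : ∀ y z, y ∈ coneGen ((fun y => y - xb) '' Ω) →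
        z ∈ coneGen ((fun y => y - xb) '' Ω) →
        y + z ∈ coneGen ((fun y => y - xb) '' Ω) := by
      intro y z hy hz
      rw [memK] at hy hz ⊢
      obtain ⟨t, ht, a, ha, rfl⟩ := hy
      obtain ⟨s, hs, b, hb, rfl⟩ := hz
      rcases eq_or_lt_of_le (add_nonneg ht hs) with h | h
      · have ht0 : t = 0 := by linarith
        have hs0 : s = 0 := by linarith
        exact ⟨0, le_rfl, xb, hxb, by simp [ht0, hs0]⟩
      · have hr : (0:ℝ) < t + s := h
        refine ⟨t + s, le_of_lt hr, (t/(t+s)) • a + (s/(t+s)) • b,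
          hconv ha hb (by positivity) (by positivity) (by field_simp), ?_⟩
        have hne0 : t + s ≠ 0 := hr.ne'
        match_scalars <;> field_simp <;> ring
    have hsmul : ∀ (c : ℝ) (y : X), y ∈ coneGen ((fun y => y - xb) '' Ω) →
        c • y ∈ coneGen ((fun y => y - xb) '' Ω) := by
      have pos : ∀ (c : ℝ), 0 ≤ c → ∀ y ∈ coneGen ((fun y => y - xb) '' Ω),
          c • y ∈ coneGen ((fun y => y - xb) '' Ω) := by
        intro c hc y hy
        rw [memK] at hy ⊢
        obtain ⟨t, ht, a, ha, rfl⟩ := hy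
        exact ⟨c * t, mul_nonneg hc ht, a, ha, (smul_smul c t _)⟩
      intro c y hy
      rcases le_or_gt 0 c with hc | hc
      · exact pos c hc y hy
      · have : c • y = (-c) • (-y) := by module
        rw [this]
        exact pos (-c) (by linarith) (-y) (hneg y hy)
    exact ⟨{ carrier := coneGen ((fun y => y - xb) '' Ω),
             add_mem' := fun ha hb => hadd _ _ ha hb,
             zero_mem' := hzero,
             smul_mem' := fun c y hy => hsmul c y hy }, rfl⟩
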